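/- Naimark dilation for a POVM: given positive semi-definite operators {E_μ}_{μ=1}^K on a finite-dimensional Hilbert space H_B with Σ_μ E_μ = 1_B, there exist a finite-dimensional Hilbert space H_C, a unit vector |0_C⟩ ∈ H_C, and mutually orthogonal projections {P_μ} on H_B ⊗ H_C with Σ_μ P_μ = 1 such that (1_B ⊗ ⟨0_C|) P_μ (1_B ⊗ |0_C⟩) = E_μ for all μ. -/

import Mathlib

open Matrix Kronecker Finset ComplexOrder

noncomputable section
open scoped Classical

namespace Matrix.PosSemidef
/-- The positive semidefinite square root (removed from Mathlib; old definition restored). -/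
def sqrt {n 𝕜 : Type*} [Fintype n] [DecidableEq n] [RCLike 𝕜] {A : Matrix n n 𝕜}
    (hA : A.PosSemidef) : Matrix n n 𝕜 :=
  hA.1.eigenvectorUnitary.1 * diagonal ((↑) ∘ Real.sqrt ∘ hA.1.eigenvalues) *
    (star hA.1.eigenvectorUnitary : Matrix n n 𝕜)
end Matrix.PosSemidef

/-- Square root of a matrix: the PSD square root if the matrix is PSD, else 0. -/
def mSqrt {m : Type*} [Fintype m] [DecidableEq m] (A : Matrix m m ℂ) : Matrix m m ℂ :=

  if h : A.PosSemidef then h.sqrt else 0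

/-- Operator absolute value `|A| = √(Aᴴ A)`. -/
def mAbs {m : Type*} [Fintype m] [DecidableEq m] (A : Matrix m m ℂ) : Matrix m m ℂ :=
  (Matrix.posSemidef_conjTranspose_mul_self A).sqrt

/-- Von Neumann entropy (base-2), via eigenvalues of a Hermitian matrix. -/
def vnEntropy {m : Type*} [Fintype m] [DecidableEq m] (ρ : Matrix m m ℂ) : ℝ :=
  if h : ρ.IsHermitian then -∑ i, (h.eigenvalues i) * Real.logb 2 (h.eigenvalues i) else 0

/-- Partial trace over the first tensor factor. -/
def ptraceA {m p : Type*} [Fintype m] [Fintype p] (X : Matrix (m × p) (m × p) ℂ) :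
    Matrix p p ℂ := Matrix.of fun a b => ∑ k, X (k, a) (k, b)

/-- Partial trace over the second tensor factor. -/
def ptraceB {m p : Type*} [Fintype m] [Fintype p] (X : Matrix (m × p) (m × p) ℂ) :
    Matrix m m ℂ := Matrix.of fun a b => ∑ k, X (a, k) (b, k)

/-- Fidelity `F(ρ,σ) = (Tr |√ρ √σ|)²`. -/
def fidelity {m : Type*} [Fintype m] [DecidableEq m] (ρ σ : Matrix m m ℂ) : ℝ :=
  ((mAbs (mSqrt ρ * mSqrt σ)).trace.re) ^ 2

lemma Matrix.PosSemidef.isHermitian_sqrt' {n : Type*} [Fintype n] [DecidableEq n]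
    {A : Matrix n n ℂ} (hA : A.PosSemidef) : (hA.sqrt)ᴴ = hA.sqrt := by
  have hst : star ((RCLike.ofReal : ℝ → ℂ) ∘ Real.sqrt ∘ hA.1.eigenvalues)
      = (RCLike.ofReal : ℝ → ℂ) ∘ Real.sqrt ∘ hA.1.eigenvalues := by
    funext i; simp
  unfold Matrix.PosSemidef.sqrt
  rw [conjTranspose_mul, conjTranspose_mul, diagonal_conjTranspose, hst]
  simp [Matrix.mul_assoc, Matrix.star_eq_conjTranspose]

lemma Matrix.PosSemidef.sqrt_mul_self' {n : Type*} [Fintype n] [DecidableEq n]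
    {A : Matrix n n ℂ} (hA : A.PosSemidef) : hA.sqrt * hA.sqrt = A := by
  have hU : (star hA.1.eigenvectorUnitary : Matrix n n ℂ) * hA.1.eigenvectorUnitary.1 = 1 :=
    Unitary.coe_star_mul_self _
  unfold Matrix.PosSemidef.sqrt
  calc _ = hA.1.eigenvectorUnitary.1 * (diagonal ((RCLike.ofReal : ℝ → ℂ) ∘ Real.sqrt ∘ hA.1.eigenvalues)
        * ((star hA.1.eigenvectorUnitary : Matrix n n ℂ) * hA.1.eigenvectorUnitary.1)
        * diagonal ((RCLike.ofReal : ℝ → ℂ) ∘ Real.sqrt ∘ hA.1.eigenvalues))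
        * (star hA.1.eigenvectorUnitary : Matrix n n ℂ) := by simp only [Matrix.mul_assoc]
    _ = hA.1.eigenvectorUnitary.1 * diagonal ((RCLike.ofReal : ℝ → ℂ) ∘ hA.1.eigenvalues)
        * (star hA.1.eigenvectorUnitary : Matrix n n ℂ) := by
      rw [hU, Matrix.mul_one, diagonal_mul_diagonal]
      congr 3
      funext i
      simp only [Function.comp_apply]
      rw [← RCLike.ofReal_mul, Real.mul_self_sqrt (hA.eigenvalues_nonneg i)]
    _ = A := by
      conv_rhs => rw [hA.1.spectral_theorem]
      simp
/-- Naimark dilation of a POVM to a projective measurement on an enlarged space. -/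
theorem stmt9 (dB K : ℕ) (E : Fin K → Matrix (Fin dB) (Fin dB) ℂ)
    (hE : ∀ μ, (E μ).PosSemidef) (hsum : ∑ μ, E μ = 1) :
    ∃ (dC : ℕ) (v : Fin dC → ℂ), star v ⬝ᵥ v = 1 ∧
      ∃ P : Fin K → Matrix (Fin dB × Fin dC) (Fin dB × Fin dC) ℂ,
        (∀ μ, (P μ)ᴴ = P μ) ∧ (∀ μ, P μ * P μ = P μ) ∧
        (∀ μ ν, μ ≠ ν → P μ * P ν = 0) ∧ (∑ μ, P μ = 1) ∧
        (∀ μ, E μ = Matrix.of fun b b' : Fin dB =>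
          ∑ c, ∑ c', (starRingEnd ℂ) (v c) * P μ (b, c) (b', c') * v c') := by
  rcases Nat.eq_zero_or_pos K with hK | hK
  · subst hK
    have hBempty : IsEmpty (Fin dB) := by
      by_contra h
      rw [not_isEmpty_iff] at h
      obtain ⟨i⟩ := h
      have := congrFun (congrFun hsum i) i
      simp [Matrix.one_apply] at this
    refine ⟨1, fun _ => 1, by simp [dotProduct], fun _ => 0, fun μ => μ.elim0, fun μ => μ.elim0,
      fun μ ν _ => μ.elim0, ?_, fun μ => μ.elim0⟩
    ext ⟨b, c⟩ p
    exact (hBempty.false b).elim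
  · haveI : NeZero K := ⟨hK.ne'⟩
    set S : Fin K → Matrix (Fin dB) (Fin dB) ℂ := fun μ => (hE μ).sqrt with hSdef
    have hSH : ∀ μ, (S μ)ᴴ = S μ := fun μ => (hE μ).isHermitian_sqrt'
    have hSS : ∀ μ, S μ * S μ = E μ := fun μ => (hE μ).sqrt_mul_self'
    set w : Fin dB → EuclideanSpace ℂ (Fin dB × Fin K) :=
      fun b => WithLp.toLp 2 (fun p : Fin dB × Fin K => S p.2 p.1 b) with hwdef
    have hinner : ∀ b b', (inner ℂ (w b) (w b') : ℂ) = if b = b' then 1 else 0 := by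
      intro b b'
      have h1 : (inner ℂ (w b) (w b') : ℂ) = ∑ p : Fin dB × Fin K,
          (starRingEnd ℂ) (S p.2 p.1 b) * S p.2 p.1 b' := by
        simp [PiLp.inner_apply, RCLike.inner_apply, hwdef, mul_comm]
      have h2 : ∑ p : Fin dB × Fin K,
          (starRingEnd ℂ) (S p.2 p.1 b) * S p.2 p.1 b' = (∑ μ, E μ) b b' := by
        rw [Fintype.sum_prod_type, Matrix.sum_apply, Finset.sum_comm]
        refine Finset.sum_congr rfl fun μ _ => ?_
        rw [← hSS μ, Matrix.mul_apply]
        refine Finset.sum_congr rfl fun k _ => ?_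
        have h3 : (starRingEnd ℂ) (S μ k b) = S μ b k := by
          conv_rhs => rw [← hSH μ]
          rw [Matrix.conjTranspose_apply, starRingEnd_apply]
        rw [h3]
      rw [h1, h2, hsum, Matrix.one_apply]
    set sset : Set (Fin dB × Fin K) := {p | p.2 = 0} with hsset
    have hON : Orthonormal ℂ (sset.restrict fun p : Fin dB × Fin K => w p.1) := by
      rw [orthonormal_iff_ite]
      intro i j
      show inner ℂ (w (i : Fin dB × Fin K).1) (w (j : Fin dB × Fin K).1) = _
      rw [hinner]
      congr 1
      simp only [eq_iff_iff]
      constructor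
      · intro h
        apply Subtype.ext
        apply Prod.ext h
        have hi : (i : Fin dB × Fin K).2 = 0 := i.2
        have hj : (j : Fin dB × Fin K).2 = 0 := j.2
        rw [hi, hj]
      · intro h; rw [h]
    have card : Module.finrank ℂ (EuclideanSpace ℂ (Fin dB × Fin K))
        = Fintype.card (Fin dB × Fin K) := finrank_euclideanSpace
    obtain ⟨u, hu⟩ := hON.exists_orthonormalBasis_extension_of_card_eq card
    set U : Matrix (Fin dB × Fin K) (Fin dB × Fin K) ℂ :=
      Matrix.of fun p q => u q p with hUdef
    have hUU : Uᴴ * U = 1 := by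
      ext q q'
      have h := orthonormal_iff_ite.mp u.orthonormal q q'
      simp only [PiLp.inner_apply, RCLike.inner_apply] at h
      simp only [Matrix.mul_apply, Matrix.conjTranspose_apply, hUdef, Matrix.of_apply,
        Matrix.one_apply]
      simpa [mul_comm] using h
    have hU2 : U * Uᴴ = 1 := mul_eq_one_comm.mp hUU
    set D : Fin K → Matrix (Fin dB × Fin K) (Fin dB × Fin K) ℂ :=
      fun μ => Matrix.diagonal (fun p => if p.2 = μ then (1 : ℂ) else 0) with hDdef
    have hDH : ∀ μ, (D μ)ᴴ = D μ := by
      intro μ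
      have hst : (star fun p : Fin dB × Fin K => if p.2 = μ then (1:ℂ) else 0)
          = fun p => if p.2 = μ then (1:ℂ) else 0 := by
        funext p
        simp only [Pi.star_apply]
        split <;> simp
      rw [hDdef, Matrix.diagonal_conjTranspose, hst]
    have hDidem : ∀ μ, D μ * D μ = D μ := by
      intro μ
      ext p q
      rw [hDdef, Matrix.diagonal_mul_diagonal]
      by_cases h : p = q
      · subst h
        by_cases h2 : p.2 = μ <;>
          simp [Matrix.diagonal_apply_eq, Pi.mul_apply, h2]
      · simp [Matrix.diagonal_apply_ne _ h]
    have hDorth : ∀ μ ν, μ ≠ ν → D μ * D ν = 0 := by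
      intro μ ν hne
      ext p q
      rw [hDdef, Matrix.diagonal_mul_diagonal]
      by_cases h : p = q
      · subst h
        rcases eq_or_ne p.2 μ with h2 | h2
        · have h3 : p.2 ≠ ν := by rw [h2]; exact hne
          simp [Matrix.diagonal_apply_eq, Pi.mul_apply, h2, h3, hne]
        · simp [Matrix.diagonal_apply_eq, Pi.mul_apply, h2]
      · simp [Matrix.diagonal_apply_ne _ h]
    have hDsum : ∑ μ, D μ = 1 := by
      ext p q
      rw [Matrix.sum_apply]
      by_cases h : p = q
      · subst h
        simp [hDdef, Matrix.diagonal_apply_eq, Matrix.one_apply_eq, Finset.sum_ite_eq]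
      · simp [hDdef, Matrix.diagonal_apply_ne _ h, Matrix.one_apply_ne h]
    refine ⟨K, fun c => if c = 0 then 1 else 0, ?_,
      fun μ => Uᴴ * D μ * U, ?_, ?_, ?_, ?_, ?_⟩
    · simp [dotProduct, apply_ite (star : ℂ → ℂ)]
    · intro μ
      simp [Matrix.conjTranspose_mul, hDH, Matrix.mul_assoc]
    · intro μ
      calc Uᴴ * D μ * U * (Uᴴ * D μ * U)
          = Uᴴ * (D μ * ((U * Uᴴ) * (D μ * U))) := by
            simp only [Matrix.mul_assoc]
        _ = Uᴴ * D μ * U := by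
            rw [hU2, Matrix.one_mul, ← Matrix.mul_assoc (D μ) (D μ) U, hDidem μ,
              ← Matrix.mul_assoc]
    · intro μ ν hne
      calc Uᴴ * D μ * U * (Uᴴ * D ν * U)
          = Uᴴ * (D μ * ((U * Uᴴ) * (D ν * U))) := by
            simp only [Matrix.mul_assoc]
        _ = 0 := by
            rw [hU2, Matrix.one_mul, ← Matrix.mul_assoc (D μ) (D ν) U, hDorth μ ν hne,
              Matrix.zero_mul, Matrix.mul_zero]
    · rw [← Finset.sum_mul, ← Finset.mul_sum, hDsum, Matrix.mul_one, hUU]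
    · intro μ
      ext b b'
      rw [Matrix.of_apply]
      have hred : ∑ c, ∑ c', (starRingEnd ℂ) (if c = 0 then (1:ℂ) else 0)
          * (Uᴴ * D μ * U) (b, c) (b', c') * (if c' = 0 then (1:ℂ) else 0)
          = (Uᴴ * D μ * U) (b, (0 : Fin K)) (b', (0 : Fin K)) := by
        simp [apply_ite (starRingEnd ℂ), ite_mul, mul_ite]
      rw [hred]
      have hUcol : ∀ (b : Fin dB) (p : Fin dB × Fin K), U p (b, (0 : Fin K)) = S p.2 p.1 b := by
        intro b p
        have hmem : (b, (0 : Fin K)) ∈ sset := by simp [hsset]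
        have h := hu (b, (0 : Fin K)) hmem
        simp only [hUdef, Matrix.of_apply]
        rw [h]
      rw [Matrix.mul_assoc, Matrix.mul_apply]
      have hstep : ∀ p : Fin dB × Fin K,
          Uᴴ (b, (0 : Fin K)) p * (D μ * U) p (b', (0 : Fin K))
          = (starRingEnd ℂ) (S p.2 p.1 b) * ((if p.2 = μ then 1 else 0) * S p.2 p.1 b') := by
        intro p
        rw [Matrix.conjTranspose_apply, hUcol, hDdef, Matrix.diagonal_mul, hUcol]
        rfl
      rw [Finset.sum_congr rfl fun p _ => hstep p]
      rw [Fintype.sum_prod_type]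
      have hsum2 : ∀ k : Fin dB, ∑ ν, (starRingEnd ℂ) (S ν k b)
          * ((if ν = μ then (1:ℂ) else 0) * S ν k b')
          = (starRingEnd ℂ) (S μ k b) * S μ k b' := by
        intro k
        simp [mul_ite, ite_mul]
      rw [Finset.sum_congr rfl fun k _ => hsum2 k]
      rw [← hSS μ, Matrix.mul_apply]
      refine Finset.sum_congr rfl fun k _ => ?_
      have h3 : (starRingEnd ℂ) (S μ k b) = S μ b k := by
        conv_rhs => rw [← hSH μ]
        rw [Matrix.conjTranspose_apply, starRingEnd_apply]
      rw [h3]
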